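/- Let G be a group generated by two elements which either (a) possesses a normal abelian subgroup A such that the quotient G/A is infinite cyclic, or (b) is metabelian (its derived subgroup is abelian) with abelianization isomorphic to ℤ². Then the automorphism group of the free group F₂ of rank 2 acts transitively on the Aut(G)-orbits of generating pairs of G: for any two surjective group homomorphisms p, q from F₂ onto G, there exist an automorphism ψ of F₂ and an automorphism φ of G such that q = φ ∘ p ∘ ψ. -/

import Mathlib

open Subgroup Function Multiplicative
open scoped commutatorElement IsMulCommutative

namespace AutTrans

variable {H : Type*} [Group H]

lemma hom_ext_of_closure_pair {K : Type*} [Group K] {g h : H}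
    (hgen : Subgroup.closure ({g, h} : Set H) = ⊤) {f f' : H →* K}
    (hg : f g = f' g) (hh : f h = f' h) : ∀ w, f w = f' w := by
  intro w
  have hw : w ∈ Subgroup.closure ({g, h} : Set H) := hgen ▸ Subgroup.mem_top w
  induction hw using Subgroup.closure_induction with
  | mem x hx => rcases hx with rfl | rfl <;> assumption
  | one => simp
  | mul x y _ _ ihx ihy => simp [map_mul, ihx, ihy]
  | inv x _ ihx => simp [ihx]

lemma commute_all_of_closure_pair {g h : H}
    (hgen : Subgroup.closure ({g, h} : Set H) = ⊤) (hc : Commute g h) :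
    ∀ u v : H, Commute u v := by
  have mem_top : ∀ u : H, u ∈ Subgroup.closure ({g, h} : Set H) :=
    fun u => hgen ▸ Subgroup.mem_top u
  have hg : ∀ u : H, Commute g u := by
    intro u
    induction mem_top u using Subgroup.closure_induction with
    | mem x hx => exact hx.elim (fun e => e ▸ Commute.refl _) (fun e => e ▸ hc)
    | one => exact Commute.one_right g
    | mul x y _ _ ihx ihy => exact ihx.mul_right ihy
    | inv x _ ihx => exact ihx.inv_right
  have hh : ∀ u : H, Commute h u := by
    intro u
    induction mem_top u using Subgroup.closure_induction with
    | mem x hx => exact hx.elim (fun e => e ▸ hc.symm) (fun e => e ▸ Commute.refl _)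
    | one => exact Commute.one_right h
    | mul x y _ _ ihx ihy => exact ihx.mul_right ihy
    | inv x _ ihx => exact ihx.inv_right
  intro u v
  induction mem_top v using Subgroup.closure_induction with
  | mem x hx => exact hx.elim (fun e => e ▸ (hg u).symm) (fun e => e ▸ (hh u).symm)
  | one => exact Commute.one_right u
  | mul x y _ _ ihx ihy => exact ihx.mul_right ihy
  | inv x _ ihx => exact ihx.inv_right

lemma ker_eq_normalClosure_of_proj {g h : H}
    (hgen : Subgroup.closure ({g, h} : Set H) = ⊤)
    (π : H →* Multiplicative ℤ) (hg : π g = ofAdd 1) (hh : π h = 1) :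
    ∀ w, π w = 1 ↔ w ∈ Subgroup.normalClosure ({h} : Set H) := by
  set N := Subgroup.normalClosure ({h} : Set H) with hN
  have hle : N ≤ π.ker := by
    apply Subgroup.normalClosure_le_normal
    simp [Set.singleton_subset_iff, MonoidHom.mem_ker, hh]
  have hmemN : h ∈ N := Subgroup.subset_normalClosure rfl
  let ρ : Multiplicative ℤ →* H ⧸ N := zpowersHom _ ((QuotientGroup.mk' N) g)
  have key : ∀ w : H, (ρ.comp π) w = (QuotientGroup.mk' N) w := by
    apply hom_ext_of_closure_pair hgen
    · show ρ (π g) = _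
      rw [hg]
      show ((QuotientGroup.mk' N) g) ^ (toAdd (ofAdd (1:ℤ))) = _
      simp
    · show ρ (π h) = _
      rw [hh, map_one]
      exact ((QuotientGroup.eq_one_iff h).mpr hmemN).symm
  intro w
  constructor
  · intro hw
    have := key w
    simp only [MonoidHom.comp_apply, hw, map_one] at this
    exact (QuotientGroup.eq_one_iff w).mp this.symm
  · intro hw
    exact hle hw

lemma commutator_eq_normalClosure_pair {g h : H}
    (hgen : Subgroup.closure ({g, h} : Set H) = ⊤) :
    ⁅(⊤ : Subgroup H), (⊤ : Subgroup H)⁆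
      = Subgroup.normalClosure ({g * h * g⁻¹ * h⁻¹} : Set H) := by
  have hcomm : g * h * g⁻¹ * h⁻¹ = ⁅g, h⁆ := rfl
  apply le_antisymm
  · rw [Subgroup.commutator_le]
    intro x _ y _
    set N := Subgroup.normalClosure ({g * h * g⁻¹ * h⁻¹} : Set H) with hNdef
    let mk := QuotientGroup.mk' N
    have hsurj : Function.Surjective mk := QuotientGroup.mk'_surjective N
    have hclos : Subgroup.closure ({mk g, mk h} : Set (H ⧸ N)) = ⊤ := by
      rw [← Set.image_pair, ← MonoidHom.map_closure, hgen]
      exact Subgroup.map_top_of_surjective _ hsurj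
    have hc : Commute (mk g) (mk h) := by
      rw [← commutatorElement_eq_one_iff_commute]
      have : mk ⁅g, h⁆ = 1 := by
        rw [QuotientGroup.mk'_apply, QuotientGroup.eq_one_iff]
        exact Subgroup.subset_normalClosure rfl
      simpa [commutatorElement_def, map_mul, map_inv] using this
    have hQ := commute_all_of_closure_pair hclos hc (mk x) (mk y)
    have : mk ⁅x, y⁆ = 1 := by
      rw [← commutatorElement_eq_one_iff_commute] at hQ
      simpa [commutatorElement_def, map_mul, map_inv] using hQ
    rw [QuotientGroup.mk'_apply, QuotientGroup.eq_one_iff] at this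
    exact this
  · apply Subgroup.normalClosure_le_normal
    rw [Set.singleton_subset_iff, hcomm]
    exact Subgroup.commutator_mem_commutator (Subgroup.mem_top g) (Subgroup.mem_top h)


section Twin

variable {G : Type*} [Group G] (A : Subgroup G) [A.Normal] [IsMulCommutative A]

/-- Conjugation by `g` as an endomorphism of the abelian normal subgroup `A`. -/
def conjOp (g : G) : A →* A where
  toFun k := ⟨g * k * g⁻¹, Subgroup.Normal.conj_mem ‹A.Normal› k.1 k.2 g⟩
  map_one' := by ext; simp
  map_mul' x y := by ext; simp only [Subgroup.coe_mul]; group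

lemma conjOp_coe (g : G) (k : A) : (conjOp A g k : G) = g * k * g⁻¹ := rfl

lemma conjOp_congr {g g' : G} (h : g * g'⁻¹ ∈ A) : conjOp A g = conjOp A g' := by
  refine MonoidHom.ext fun k => Subtype.ext ?_
  show g * k.1 * g⁻¹ = g' * k.1 * g'⁻¹
  have hmem : g' * k.1 * g'⁻¹ ∈ A := Subgroup.Normal.conj_mem ‹A.Normal› _ k.2 g'
  have hcomm := Subgroup.mul_comm_of_mem_isMulCommutative (H := A) h hmem
  calc g * k.1 * g⁻¹ = (g * g'⁻¹) * (g' * k.1 * g'⁻¹) * (g * g'⁻¹)⁻¹ := by group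
    _ = (g' * k.1 * g'⁻¹) * (g * g'⁻¹) * (g * g'⁻¹)⁻¹ := by rw [hcomm]
    _ = g' * k.1 * g'⁻¹ := by group

lemma conjOp_comp (g h : G) : (conjOp A g).comp (conjOp A h) = conjOp A (g * h) := by
  ext k
  simp only [MonoidHom.comp_apply, conjOp_coe]
  group

lemma conjOp_swap (hGA : ∀ g h : G, g * h * g⁻¹ * h⁻¹ ∈ A) (g h : G) (k : A) :
    conjOp A g (conjOp A h k) = conjOp A h (conjOp A g k) := by
  have h1 : conjOp A g (conjOp A h k) = conjOp A (g * h) k := by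
    rw [← conjOp_comp]; rfl
  have h2 : conjOp A h (conjOp A g k) = conjOp A (h * g) k := by
    rw [← conjOp_comp]; rfl
  rw [h1, h2, conjOp_congr A (g := g * h) (g' := h * g) (by simpa [mul_assoc] using hGA g h)]

/-- The subgroup of pointwise products of conjugation operators. -/
def Ops : Subgroup (A →* A) := Subgroup.closure (Set.range (conjOp A))

lemma conj_comm_op (hGA : ∀ g h : G, g * h * g⁻¹ * h⁻¹ ∈ A) (g : G) {M : A →* A}
    (hM : M ∈ Ops A) : ∀ k, conjOp A g (M k) = M (conjOp A g k) := by
  induction hM using Subgroup.closure_induction with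
  | mem f hf =>
    obtain ⟨h, rfl⟩ := hf
    exact fun k => conjOp_swap A hGA g h k
  | one => intro k; simp
  | mul f f' _ _ ihf ihf' => intro k; simp [MonoidHom.mul_apply, map_mul, ihf, ihf']
  | inv f _ ihf => intro k; simp [MonoidHom.inv_apply, map_inv, ihf]

lemma op_comm (hGA : ∀ g h : G, g * h * g⁻¹ * h⁻¹ ∈ A) {Λ M : A →* A}
    (hΛ : Λ ∈ Ops A) (hM : M ∈ Ops A) : ∀ k, Λ (M k) = M (Λ k) := by
  induction hΛ using Subgroup.closure_induction with
  | mem f hf =>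
    obtain ⟨h, rfl⟩ := hf
    exact conj_comm_op A hGA h hM
  | one => intro k; simp
  | mul f f' _ _ ihf ihf' => intro k; simp [MonoidHom.mul_apply, map_mul, ihf, ihf']
  | inv f _ ihf => intro k; simp [MonoidHom.inv_apply, map_inv, ihf]

lemma opgen {s : G} (hs : s ∈ A) :
    ∀ g ∈ Subgroup.normalClosure ({s} : Set G), ∃ M ∈ Ops A, g = ↑(M ⟨s, hs⟩) := by
  intro g hg
  have hg' : g ∈ Subgroup.closure (Group.conjugatesOfSet ({s} : Set G)) := hg
  clear hg
  induction hg' using Subgroup.closure_induction with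
  | mem x hx =>
    obtain ⟨a, ha, hconj⟩ := Group.mem_conjugatesOfSet_iff.mp hx
    rw [Set.mem_singleton_iff] at ha
    subst ha
    obtain ⟨c, hc⟩ := isConj_iff.mp hconj
    exact ⟨conjOp A c, Subgroup.subset_closure ⟨c, rfl⟩, by rw [conjOp_coe, hc]⟩
  | one => exact ⟨1, one_mem _, by simp⟩
  | mul x y _ _ ihx ihy =>
    obtain ⟨Mx, hMx, hx⟩ := ihx
    obtain ⟨My, hMy, hy⟩ := ihy
    exact ⟨Mx * My, mul_mem hMx hMy, by simp [MonoidHom.mul_apply, hx, hy]⟩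
  | inv x _ ihx =>
    obtain ⟨Mx, hMx, hx⟩ := ihx
    exact ⟨Mx⁻¹, inv_mem hMx, by simp [MonoidHom.inv_apply, hx]⟩

lemma twin {H : Type*} [Group H] (p q : H →* G) (t : H)
    (hGA : ∀ g h : G, g * h * g⁻¹ * h⁻¹ ∈ A)
    (hconj : ∀ u, p u * (q u)⁻¹ ∈ A)
    (hpt : p t ∈ A) (hqt : q t ∈ A)
    (hmod : q t ∈ Subgroup.normalClosure ({p t} : Set G))
    (hker : ∀ w, p w = 1 → w ∈ Subgroup.normalClosure ({t} : Set H)) :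
    ∀ w, p w = 1 → q w = 1 := by
  have main : ∀ w ∈ Subgroup.normalClosure ({t} : Set H),
      ∃ Λ ∈ Ops A, p w = ↑(Λ ⟨p t, hpt⟩) ∧ q w = ↑(Λ ⟨q t, hqt⟩) := by
    intro w hw
    have hw' : w ∈ Subgroup.closure (Group.conjugatesOfSet ({t} : Set H)) := hw
    clear hw
    induction hw' using Subgroup.closure_induction with
    | mem x hx =>
      obtain ⟨a, ha, hconj'⟩ := Group.mem_conjugatesOfSet_iff.mp hx
      rw [Set.mem_singleton_iff] at ha
      subst ha
      obtain ⟨c, hc⟩ := isConj_iff.mp hconj'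
      refine ⟨conjOp A (p c), Subgroup.subset_closure ⟨p c, rfl⟩, ?_, ?_⟩
      · rw [conjOp_coe, ← hc]; simp [map_mul, map_inv]
      · rw [conjOp_congr A (hconj c), conjOp_coe, ← hc]; simp [map_mul, map_inv]
    | one => exact ⟨1, one_mem _, by simp, by simp⟩
    | mul x y _ _ ihx ihy =>
      obtain ⟨Λx, hΛx, hx1, hx2⟩ := ihx
      obtain ⟨Λy, hΛy, hy1, hy2⟩ := ihy
      exact ⟨Λx * Λy, mul_mem hΛx hΛy,
        by simp [MonoidHom.mul_apply, map_mul, hx1, hy1],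
        by simp [MonoidHom.mul_apply, map_mul, hx2, hy2]⟩
    | inv x _ ihx =>
      obtain ⟨Λx, hΛx, hx1, hx2⟩ := ihx
      exact ⟨Λx⁻¹, inv_mem hΛx,
        by simp [MonoidHom.inv_apply, map_inv, hx1],
        by simp [MonoidHom.inv_apply, map_inv, hx2]⟩
  intro w hw
  obtain ⟨Λ, hΛ, hp1, hq1⟩ := main w (hker w hw)
  obtain ⟨M, hM, hqteq⟩ := opgen A hpt (q t) hmod
  have htq : (⟨q t, hqt⟩ : A) = M ⟨p t, hpt⟩ := Subtype.ext hqteq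
  have hΛtp : Λ ⟨p t, hpt⟩ = 1 := by
    apply Subtype.ext
    rw [← hp1, hw]
    rfl
  rw [hq1, htq, op_comm A hGA hΛ hM ⟨p t, hpt⟩, hΛtp, map_one]
  rfl

end Twin


abbrev F2 : Type := FreeGroup (Fin 2)

def ga : F2 := FreeGroup.of 0
def gb : F2 := FreeGroup.of 1

lemma closure_pair_F2 : Subgroup.closure ({ga, gb} : Set F2) = ⊤ := by
  rw [eq_top_iff, ← FreeGroup.closure_range_of (Fin 2)]
  apply Subgroup.closure_mono
  rintro x ⟨i, rfl⟩
  fin_cases i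
  · exact Or.inl rfl
  · exact Or.inr rfl

/-- Build an automorphism of `F2` from values on generators with explicit inverse. -/
def mkAut (f g : Fin 2 → F2)
    (h1 : ∀ i, FreeGroup.lift g (f i) = FreeGroup.of i)
    (h2 : ∀ i, FreeGroup.lift f (g i) = FreeGroup.of i) : F2 ≃* F2 :=
  MonoidHom.toMulEquiv (FreeGroup.lift f) (FreeGroup.lift g)
    (FreeGroup.ext_hom _ _ (by intro i; simp [h1 i]))
    (FreeGroup.ext_hom _ _ (by intro i; simp [h2 i]))

@[simp] lemma mkAut_apply (f g h1 h2) (x : F2) : mkAut f g h1 h2 x = FreeGroup.lift f x := rfl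

def autSwap : F2 ≃* F2 :=
  mkAut ![gb, ga] ![gb, ga]
    (by intro i; fin_cases i <;> simp [ga, gb])
    (by intro i; fin_cases i <;> simp [ga, gb])

def autInvA : F2 ≃* F2 :=
  mkAut ![ga⁻¹, gb] ![ga⁻¹, gb]
    (by intro i; fin_cases i <;> simp [ga, gb])
    (by intro i; fin_cases i <;> simp [ga, gb])

def autInvB : F2 ≃* F2 :=
  mkAut ![ga, gb⁻¹] ![ga, gb⁻¹]
    (by intro i; fin_cases i <;> simp [ga, gb])
    (by intro i; fin_cases i <;> simp [ga, gb])

def autMulA (k : ℤ) : F2 ≃* F2 :=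
  mkAut ![ga * gb ^ k, gb] ![ga * gb ^ (-k), gb]
    (by intro i; fin_cases i <;> simp [ga, gb] <;> group)
    (by intro i; fin_cases i <;> simp [ga, gb] <;> group)

def autMulB (k : ℤ) : F2 ≃* F2 :=
  mkAut ![ga, gb * ga ^ k] ![ga, gb * ga ^ (-k)]
    (by intro i; fin_cases i <;> simp [ga, gb] <;> group)
    (by intro i; fin_cases i <;> simp [ga, gb] <;> group)

@[simp] lemma autSwap_a : autSwap ga = gb := by simp [autSwap, ga, gb]
@[simp] lemma autSwap_b : autSwap gb = ga := by simp [autSwap, ga, gb]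
@[simp] lemma autInvA_a : autInvA ga = ga⁻¹ := by simp [autInvA, ga, gb]
@[simp] lemma autInvA_b : autInvA gb = gb := by simp [autInvA, ga, gb]
@[simp] lemma autInvB_a : autInvB ga = ga := by simp [autInvB, ga, gb]
@[simp] lemma autInvB_b : autInvB gb = gb⁻¹ := by simp [autInvB, ga, gb]
@[simp] lemma autMulA_a (k : ℤ) : autMulA k ga = ga * gb ^ k := by simp [autMulA, ga, gb]
@[simp] lemma autMulA_b (k : ℤ) : autMulA k gb = gb := by simp [autMulA, ga, gb]
@[simp] lemma autMulB_a (k : ℤ) : autMulB k ga = ga := by simp [autMulB, ga, gb]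
@[simp] lemma autMulB_b (k : ℤ) : autMulB k gb = gb * ga ^ k := by simp [autMulB, ga, gb]


section Euclid

def std2 : F2 →* Multiplicative (ℤ × ℤ) := FreeGroup.lift ![ofAdd (1,0), ofAdd (0,1)]
def std1 : F2 →* Multiplicative ℤ := FreeGroup.lift ![ofAdd 1, 1]

@[simp] lemma std2_a : std2 ga = ofAdd (1,0) := by simp [std2, ga]
@[simp] lemma std2_b : std2 gb = ofAdd (0,1) := by simp [std2, gb]
@[simp] lemma std1_a : std1 ga = ofAdd 1 := by simp [std1, ga]
@[simp] lemma std1_b : std1 gb = 1 := by simp [std1, gb]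

lemma exists_zpow {M : Type*} [CommGroup M] (u : F2 →* M) (hu : Surjective u) (z : M) :
    ∃ m n : ℤ, (u ga) ^ m * (u gb) ^ n = z := by
  have hz : z ∈ Subgroup.closure ({u ga, u gb} : Set M) := by
    rw [← Set.image_pair, ← MonoidHom.map_closure, closure_pair_F2,
      Subgroup.map_top_of_surjective u hu]
    trivial
  exact Subgroup.mem_closure_pair.mp hz

lemma step_equiv {M : Type*} [Group M] {u v : F2 →* M} (τ : F2 ≃* F2)
    (h : ∃ ψ : F2 ≃* F2, ∀ w, (u.comp τ.toMonoidHom) (ψ w) = v w) :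
    ∃ ψ : F2 ≃* F2, ∀ w, u (ψ w) = v w := by
  obtain ⟨ψ, hψ⟩ := h
  exact ⟨ψ.trans τ, fun w => hψ w⟩

lemma step_surj {M : Type*} [Group M] {u : F2 →* M} (hu : Surjective u) (τ : F2 ≃* F2) :
    Surjective (u.comp τ.toMonoidHom) := hu.comp τ.surjective

lemma final_equiv {M : Type*} [Group M] {u v : F2 →* M} (ha : u ga = v ga) (hb : u gb = v gb) :
    ∃ ψ : F2 ≃* F2, ∀ w, u (ψ w) = v w :=
  ⟨MulEquiv.refl _, fun w => hom_ext_of_closure_pair closure_pair_F2 ha hb w⟩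

lemma toAdd_eq {α : Type*} [AddGroup α] {x : Multiplicative α} {p : α}
    (h : x.toAdd = p) : x = ofAdd p := by
  rw [← h]; rfl

-- ### one-dimensional euclid

lemma euclid1_base_m1 {u : F2 →* Multiplicative ℤ}
    (hm : (u ga).toAdd = 1) (hn : (u gb).toAdd = 0) :
    ∃ ψ : F2 ≃* F2, ∀ w, u (ψ w) = std1 w := by
  apply final_equiv
  · rw [std1_a]; exact toAdd_eq hm
  · rw [std1_b]; exact toAdd_eq hn

lemma euclid1_base0 {u : F2 →* Multiplicative ℤ} (hu : Surjective u)
    (hn : (u gb).toAdd = 0) :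
    ∃ ψ : F2 ≃* F2, ∀ w, u (ψ w) = std1 w := by
  obtain ⟨k, l, hkl⟩ := exists_zpow u hu (ofAdd 1)
  have h1 : k * (u ga).toAdd + l * (u gb).toAdd = 1 := by
    have := congrArg Multiplicative.toAdd hkl
    simpa [toAdd_mul, toAdd_zpow, smul_eq_mul] using this
  rw [hn, mul_zero, add_zero] at h1
  have hunit : (u ga).toAdd = 1 ∨ (u ga).toAdd = -1 := by
    have : IsUnit ((u ga).toAdd) := IsUnit.of_mul_eq_one k (by linarith [h1, mul_comm k (u ga).toAdd])
    exact Int.isUnit_iff.mp this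
  rcases hunit with hm | hm
  · exact euclid1_base_m1 hm hn
  · apply step_equiv autInvA
    apply euclid1_base_m1 (u := u.comp autInvA.toMonoidHom)
    · show (u (autInvA ga)).toAdd = 1
      rw [autInvA_a, map_inv, toAdd_inv, hm]; ring
    · show (u (autInvA gb)).toAdd = 0
      rw [autInvA_b, hn]

lemma euclid1 (u : F2 →* Multiplicative ℤ) (hu : Surjective u) :
    ∃ ψ : F2 ≃* F2, ∀ w, u (ψ w) = std1 w := by
  suffices H : ∀ k : ℕ, ∀ u : F2 →* Multiplicative ℤ, Surjective u →
      (u ga).toAdd.natAbs + (u gb).toAdd.natAbs ≤ k →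
      ∃ ψ : F2 ≃* F2, ∀ w, u (ψ w) = std1 w from H _ u hu le_rfl
  intro k
  induction k using Nat.strong_induction_on with
  | _ k IH =>
    intro u hu hk
    by_cases hn1 : (u gb).toAdd = 0
    · exact euclid1_base0 hu hn1
    · by_cases hm1 : (u ga).toAdd = 0
      · apply step_equiv autSwap
        apply euclid1_base0 (step_surj hu autSwap)
        show (u (autSwap gb)).toAdd = 0
        rw [autSwap_b]; exact hm1
      · set m1 := (u ga).toAdd with hm1def
        set n1 := (u gb).toAdd with hn1def
        rcases le_or_gt n1.natAbs m1.natAbs with hle | hlt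
        · set e : ℤ := if (0 ≤ m1) ↔ (0 ≤ n1) then -1 else 1 with he
          have hval : ((u.comp (autMulA e).toMonoidHom) ga).toAdd = m1 + e * n1 := by
            show (u (autMulA e ga)).toAdd = _
            rw [autMulA_a, map_mul, map_zpow, toAdd_mul, toAdd_zpow, smul_eq_mul]
          have hvalb : ((u.comp (autMulA e).toMonoidHom) gb).toAdd = n1 := by
            show (u (autMulA e gb)).toAdd = _
            rw [autMulA_b]
          have hdec : (m1 + e * n1).natAbs < m1.natAbs := by
            rw [he]; split_ifs with h <;> omega
          apply step_equiv (autMulA e)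
          apply IH ((m1 + e * n1).natAbs + n1.natAbs) (by omega) _
            (step_surj hu (autMulA e))
          rw [hval, hvalb]
        · set e : ℤ := if (0 ≤ m1) ↔ (0 ≤ n1) then -1 else 1 with he
          have hval : ((u.comp (autMulB e).toMonoidHom) gb).toAdd = n1 + e * m1 := by
            show (u (autMulB e gb)).toAdd = _
            rw [autMulB_b, map_mul, map_zpow, toAdd_mul, toAdd_zpow, smul_eq_mul]
          have hvala : ((u.comp (autMulB e).toMonoidHom) ga).toAdd = m1 := by
            show (u (autMulB e ga)).toAdd = _
            rw [autMulB_a]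
          have hdec : (n1 + e * m1).natAbs < n1.natAbs := by
            rw [he]; split_ifs with h <;> omega
          apply step_equiv (autMulB e)
          apply IH (m1.natAbs + (n1 + e * m1).natAbs) (by omega) _
            (step_surj hu (autMulB e))
          rw [hval, hvala]

-- ### two-dimensional euclid

lemma prod_toAdd_mul (x y : Multiplicative (ℤ × ℤ)) :
    (x * y).toAdd.1 = x.toAdd.1 + y.toAdd.1 ∧ (x * y).toAdd.2 = x.toAdd.2 + y.toAdd.2 :=
  ⟨rfl, rfl⟩

lemma euclid2_base3 {u : F2 →* Multiplicative (ℤ × ℤ)}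
    (hm1 : (u ga).toAdd.1 = 1) (hn : (u gb).toAdd = (0, 1)) :
    ∃ ψ : F2 ≃* F2, ∀ w, u (ψ w) = std2 w := by
  apply step_equiv (autMulA (-(u ga).toAdd.2))
  apply final_equiv
  · show u (autMulA _ ga) = std2 ga
    rw [autMulA_a, map_mul, map_zpow, std2_a]
    apply toAdd_eq
    rw [toAdd_mul, toAdd_zpow, hn]
    ext
    · simpa using hm1
    · simp
  · show u (autMulA _ gb) = std2 gb
    rw [autMulA_b, std2_b]
    exact toAdd_eq hn

lemma euclid2_base2 {u : F2 →* Multiplicative (ℤ × ℤ)} (hu : Surjective u)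
    (hm1 : (u ga).toAdd.1 = 1) (hn1 : (u gb).toAdd.1 = 0) :
    ∃ ψ : F2 ≃* F2, ∀ w, u (ψ w) = std2 w := by
  obtain ⟨k, l, hkl⟩ := exists_zpow u hu (ofAdd ((0 : ℤ), (1 : ℤ)))
  have h1 : k * (u ga).toAdd.1 + l * (u gb).toAdd.1 = 0 ∧
      k * (u ga).toAdd.2 + l * (u gb).toAdd.2 = 1 := by
    have := congrArg Multiplicative.toAdd hkl
    rw [toAdd_mul, toAdd_zpow, toAdd_zpow] at this
    constructor
    · have := congrArg Prod.fst this
      simpa [smul_eq_mul] using this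
    · have := congrArg Prod.snd this
      simpa [smul_eq_mul] using this
  obtain ⟨h1a, h1b⟩ := h1
  rw [hm1, mul_one, hn1, mul_zero, add_zero] at h1a
  subst h1a
  rw [zero_mul, zero_add] at h1b
  have hunit : (u gb).toAdd.2 = 1 ∨ (u gb).toAdd.2 = -1 := by
    have : IsUnit ((u gb).toAdd.2) := IsUnit.of_mul_eq_one l (by linarith [mul_comm l (u gb).toAdd.2])
    exact Int.isUnit_iff.mp this
  rcases hunit with hn2 | hn2
  · exact euclid2_base3 hm1 (by ext <;> assumption)
  · apply step_equiv autInvB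
    apply euclid2_base3 (u := u.comp autInvB.toMonoidHom)
    · show (u (autInvB ga)).toAdd.1 = 1
      rw [autInvB_a]; exact hm1
    · show (u (autInvB gb)).toAdd = (0, 1)
      rw [autInvB_b, map_inv, toAdd_inv]
      ext
      · simpa using hn1
      · simpa using congrArg Neg.neg hn2

lemma euclid2_base0 {u : F2 →* Multiplicative (ℤ × ℤ)} (hu : Surjective u)
    (hn1 : (u gb).toAdd.1 = 0) :
    ∃ ψ : F2 ≃* F2, ∀ w, u (ψ w) = std2 w := by
  obtain ⟨k, l, hkl⟩ := exists_zpow u hu (ofAdd ((1 : ℤ), (0 : ℤ)))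
  have h1a : k * (u ga).toAdd.1 + l * (u gb).toAdd.1 = 1 := by
    have := congrArg Multiplicative.toAdd hkl
    rw [toAdd_mul, toAdd_zpow, toAdd_zpow] at this
    have := congrArg Prod.fst this
    simpa [smul_eq_mul] using this
  rw [hn1, mul_zero, add_zero] at h1a
  have hunit : (u ga).toAdd.1 = 1 ∨ (u ga).toAdd.1 = -1 := by
    have : IsUnit ((u ga).toAdd.1) := IsUnit.of_mul_eq_one k (by linarith [mul_comm k (u ga).toAdd.1])
    exact Int.isUnit_iff.mp this
  rcases hunit with hm1 | hm1
  · exact euclid2_base2 hu hm1 hn1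
  · apply step_equiv autInvA
    apply euclid2_base2 (step_surj hu autInvA)
    · show (u (autInvA ga)).toAdd.1 = 1
      rw [autInvA_a, map_inv, toAdd_inv]
      simpa using congrArg Neg.neg hm1
    · show (u (autInvA gb)).toAdd.1 = 0
      rw [autInvA_b]; exact hn1

lemma euclid2 (u : F2 →* Multiplicative (ℤ × ℤ)) (hu : Surjective u) :
    ∃ ψ : F2 ≃* F2, ∀ w, u (ψ w) = std2 w := by
  suffices H : ∀ k : ℕ, ∀ u : F2 →* Multiplicative (ℤ × ℤ), Surjective u →
      (u ga).toAdd.1.natAbs + (u gb).toAdd.1.natAbs ≤ k →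
      ∃ ψ : F2 ≃* F2, ∀ w, u (ψ w) = std2 w from H _ u hu le_rfl
  intro k
  induction k using Nat.strong_induction_on with
  | _ k IH =>
    intro u hu hk
    by_cases hn1 : (u gb).toAdd.1 = 0
    · exact euclid2_base0 hu hn1
    · by_cases hm1 : (u ga).toAdd.1 = 0
      · apply step_equiv autSwap
        apply euclid2_base0 (step_surj hu autSwap)
        show (u (autSwap gb)).toAdd.1 = 0
        rw [autSwap_b]; exact hm1
      · set m1 := (u ga).toAdd.1 with hm1def
        set n1 := (u gb).toAdd.1 with hn1def
        rcases le_or_gt n1.natAbs m1.natAbs with hle | hlt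
        · set e : ℤ := if (0 ≤ m1) ↔ (0 ≤ n1) then -1 else 1 with he
          have hval : ((u.comp (autMulA e).toMonoidHom) ga).toAdd.1 = m1 + e * n1 := by
            show (u (autMulA e ga)).toAdd.1 = _
            rw [autMulA_a, map_mul, map_zpow]
            have := (prod_toAdd_mul (u ga) ((u gb) ^ e)).1
            rw [this, toAdd_zpow]
            simp [smul_eq_mul]
            rfl
          have hvalb : ((u.comp (autMulA e).toMonoidHom) gb).toAdd.1 = n1 := by
            show (u (autMulA e gb)).toAdd.1 = _
            rw [autMulA_b]
          have hdec : (m1 + e * n1).natAbs < m1.natAbs := by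
            rw [he]; split_ifs with h <;> omega
          apply step_equiv (autMulA e)
          apply IH ((m1 + e * n1).natAbs + n1.natAbs) (by omega) _
            (step_surj hu (autMulA e))
          rw [hval, hvalb]
        · set e : ℤ := if (0 ≤ m1) ↔ (0 ≤ n1) then -1 else 1 with he
          have hval : ((u.comp (autMulB e).toMonoidHom) gb).toAdd.1 = n1 + e * m1 := by
            show (u (autMulB e gb)).toAdd.1 = _
            rw [autMulB_b, map_mul, map_zpow]
            have := (prod_toAdd_mul (u gb) ((u ga) ^ e)).1
            rw [this, toAdd_zpow]
            simp [smul_eq_mul]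
            rfl
          have hvala : ((u.comp (autMulB e).toMonoidHom) ga).toAdd.1 = m1 := by
            show (u (autMulB e ga)).toAdd.1 = _
            rw [autMulB_a]
          have hdec : (n1 + e * m1).natAbs < n1.natAbs := by
            rw [he]; split_ifs with h <;> omega
          apply step_equiv (autMulB e)
          apply IH (m1.natAbs + (n1 + e * m1).natAbs) (by omega) _
            (step_surj hu (autMulB e))
          rw [hval, hvala]

end Euclid

section Assembly

lemma build_phi {G : Type*} [Group G] {p q : F2 →* G} (hp : Surjective p) (hq : Surjective q)
    (hiff : ∀ w, p w = 1 ↔ q w = 1) : ∃ φ : G ≃* G, ∀ w, φ (p w) = q w := by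
  have mkphi : ∀ (p q : F2 →* G) (hp : Surjective p),
      (∀ w, p w = 1 → q w = 1) → ∃ φ0 : G →* G, ∀ w, φ0 (p w) = q w := by
    intro p q hp h
    have hle : p.ker ≤ q.ker := fun w hw =>
      MonoidHom.mem_ker.mpr (h w (MonoidHom.mem_ker.mp hw))
    refine ⟨(QuotientGroup.lift p.ker q hle).comp
      (QuotientGroup.quotientKerEquivOfSurjective p hp).symm.toMonoidHom, fun w => ?_⟩
    have h1 : (QuotientGroup.quotientKerEquivOfSurjective p hp) ((w : F2 ⧸ p.ker)) = p w :=
      QuotientGroup.kerLift_mk p w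
    have h2 : (QuotientGroup.quotientKerEquivOfSurjective p hp).symm (p w) = (w : F2 ⧸ p.ker) :=
      (MulEquiv.symm_apply_eq _).mpr h1.symm
    show (QuotientGroup.lift p.ker q hle) ((QuotientGroup.quotientKerEquivOfSurjective p hp).symm (p w)) = q w
    rw [h2]
    exact QuotientGroup.lift_mk' _ _ w
  obtain ⟨φ0, hφ0⟩ := mkphi p q hp (fun w hw => (hiff w).mp hw)
  obtain ⟨φ1, hφ1⟩ := mkphi q p hq (fun w hw => (hiff w).mpr hw)
  have inv0 : ∀ g, φ1 (φ0 g) = g := by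
    intro g; obtain ⟨w, rfl⟩ := hp g; rw [hφ0, hφ1]
  have inv1 : ∀ g, φ0 (φ1 g) = g := by
    intro g; obtain ⟨w, rfl⟩ := hq g; rw [hφ1, hφ0]
  exact ⟨MonoidHom.toMulEquiv φ0 φ1 (MonoidHom.ext inv0) (MonoidHom.ext inv1),
    fun w => hφ0 w⟩

lemma gen_top {G : Type*} [Group G] {r : F2 →* G} (hr : Surjective r) :
    Subgroup.closure ({r ga, r gb} : Set G) = ⊤ := by
  rw [← Set.image_pair, ← MonoidHom.map_closure, closure_pair_F2]
  exact Subgroup.map_top_of_surjective r hr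

/-- Case (a): normal abelian subgroup with infinite cyclic quotient. -/
lemma caseA {G : Type*} [Group G] (A : Subgroup G) [A.Normal]
    (hA : ∀ x y : A, x * y = y * x) (ε : (G ⧸ A) ≃* Multiplicative ℤ)
    (p q : F2 →* G) (hp : Surjective p) (hq : Surjective q) :
    ∃ (ψ : F2 ≃* F2) (φ : G ≃* G), ∀ w, q w = φ (p (ψ w)) := by
  letI : IsMulCommutative A := ⟨⟨hA⟩⟩
  set π : G →* Multiplicative ℤ := ε.toMonoidHom.comp (QuotientGroup.mk' A) with hπ
  have hkerπ : ∀ g, π g = 1 ↔ g ∈ A := by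
    intro g
    rw [hπ]
    show ε ((QuotientGroup.mk' A) g) = 1 ↔ _
    rw [← map_one ε, (MulEquiv.injective ε).eq_iff, QuotientGroup.mk'_apply,
      QuotientGroup.eq_one_iff]
  have hπs : Surjective π := ε.surjective.comp (QuotientGroup.mk'_surjective A)
  obtain ⟨ψp, hψp⟩ := euclid1 (π.comp p) (hπs.comp hp)
  obtain ⟨ψq, hψq⟩ := euclid1 (π.comp q) (hπs.comp hq)
  set p' : F2 →* G := p.comp ψp.toMonoidHom with hp'def
  set q' : F2 →* G := q.comp ψq.toMonoidHom with hq'def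
  have hπp' : ∀ w, π (p' w) = std1 w := fun w => hψp w
  have hπq' : ∀ w, π (q' w) = std1 w := fun w => hψq w
  have hp' : Surjective p' := hp.comp ψp.surjective
  have hq' : Surjective q' := hq.comp ψq.surjective
  have hGA : ∀ g h : G, g * h * g⁻¹ * h⁻¹ ∈ A := by
    intro g h
    rw [← hkerπ]
    show π (⁅g, h⁆) = 1
    rw [map_commutatorElement]
    exact commutatorElement_eq_one_iff_commute.mpr (mul_comm (π g) (π h))
  have hconj : ∀ u, p' u * (q' u)⁻¹ ∈ A := by
    intro u
    rw [← hkerπ, map_mul, map_inv, hπp', hπq', mul_inv_cancel]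
  have hconj' : ∀ u, q' u * (p' u)⁻¹ ∈ A := by
    intro u
    rw [← hkerπ, map_mul, map_inv, hπp', hπq', mul_inv_cancel]
  have hpt : p' gb ∈ A := by rw [← hkerπ, hπp', std1_b]
  have hqt : q' gb ∈ A := by rw [← hkerπ, hπq', std1_b]
  have hkerF : ∀ (r' : F2 →* G), (∀ w, π (r' w) = std1 w) →
      ∀ w, r' w = 1 → w ∈ Subgroup.normalClosure ({gb} : Set F2) := by
    intro r' hr w hw
    have : std1 w = 1 := by rw [← hr w, hw, map_one]
    exact (ker_eq_normalClosure_of_proj closure_pair_F2 std1 std1_a std1_b w).mp this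
  have hmodp : ∀ g, π g = 1 ↔ g ∈ Subgroup.normalClosure ({p' gb} : Set G) :=
    ker_eq_normalClosure_of_proj (gen_top hp') π (by rw [hπp', std1_a]) (by rw [hπp', std1_b])
  have hmodq : ∀ g, π g = 1 ↔ g ∈ Subgroup.normalClosure ({q' gb} : Set G) :=
    ker_eq_normalClosure_of_proj (gen_top hq') π (by rw [hπq', std1_a]) (by rw [hπq', std1_b])
  have dir1 : ∀ w, p' w = 1 → q' w = 1 :=
    twin A p' q' gb hGA hconj hpt hqt
      ((hmodp (q' gb)).mp (by rw [hπq', std1_b])) (hkerF p' hπp')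
  have dir2 : ∀ w, q' w = 1 → p' w = 1 :=
    twin A q' p' gb hGA hconj' hqt hpt
      ((hmodq (p' gb)).mp (by rw [hπp', std1_b])) (hkerF q' hπq')
  obtain ⟨φ, hφ⟩ := build_phi hp' hq' (fun w => ⟨dir1 w, dir2 w⟩)
  refine ⟨ψq.symm.trans ψp, φ, fun w => ?_⟩
  have h := hφ (ψq.symm w)
  have hq2 : q' (ψq.symm w) = q w := by
    show q (ψq (ψq.symm w)) = q w
    rw [MulEquiv.apply_symm_apply]
  rw [← hq2, ← h]
  rfl

lemma std2_ker (w : F2) (hw : std2 w = 1) :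
    w ∈ ⁅(⊤ : Subgroup F2), (⊤ : Subgroup F2)⁆ := by
  set ρ : Multiplicative (ℤ × ℤ) →* Abelianization F2 :=
    MonoidHom.mk' (fun z => (Abelianization.of ga) ^ z.toAdd.1 * (Abelianization.of gb) ^ z.toAdd.2)
      (by
        intro x y
        show (Abelianization.of ga) ^ (x.toAdd.1 + y.toAdd.1) *
          (Abelianization.of gb) ^ (x.toAdd.2 + y.toAdd.2) = _
        rw [zpow_add, zpow_add, mul_mul_mul_comm]) with hρ
  have key : ∀ v, (ρ.comp std2) v = Abelianization.of v := by
    apply hom_ext_of_closure_pair closure_pair_F2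
    · show ρ (std2 ga) = _
      rw [std2_a]
      show (Abelianization.of ga) ^ (1 : ℤ) * (Abelianization.of gb) ^ (0 : ℤ) = _
      simp
    · show ρ (std2 gb) = _
      rw [std2_b]
      show (Abelianization.of ga) ^ (0 : ℤ) * (Abelianization.of gb) ^ (1 : ℤ) = _
      simp
  have h1 : Abelianization.of w = 1 := by
    rw [← key w]
    show ρ (std2 w) = 1
    rw [hw, map_one]
  exact (QuotientGroup.eq_one_iff w).mp h1

/-- Case (b): metabelian with abelianization `ℤ²`. -/
lemma caseB {G : Type*} [Group G]
    (hbot : ⁅⁅(⊤ : Subgroup G), (⊤ : Subgroup G)⁆, ⁅(⊤ : Subgroup G), (⊤ : Subgroup G)⁆⁆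
      = (⊥ : Subgroup G))
    (η : Abelianization G ≃* Multiplicative (ℤ × ℤ))
    (p q : F2 →* G) (hp : Surjective p) (hq : Surjective q) :
    ∃ (ψ : F2 ≃* F2) (φ : G ≃* G), ∀ w, q w = φ (p (ψ w)) := by
  set K : Subgroup G := ⁅(⊤ : Subgroup G), (⊤ : Subgroup G)⁆ with hK
  have hA : ∀ x y : K, x * y = y * x := by
    intro x y
    have hmem : ⁅(x : G), (y : G)⁆ ∈ (⊥ : Subgroup G) := by
      rw [← hbot]; exact Subgroup.commutator_mem_commutator x.2 y.2
    rw [Subgroup.mem_bot] at hmem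
    exact Subtype.ext (commutatorElement_eq_one_iff_commute.mp hmem)
  letI : IsMulCommutative K := ⟨⟨hA⟩⟩
  have ofsurj : Surjective (Abelianization.of (G := G)) := fun x =>
    QuotientGroup.induction_on x fun g => ⟨g, rfl⟩
  have hmemK : ∀ g : G, Abelianization.of g = 1 ↔ g ∈ K := fun g =>
    QuotientGroup.eq_one_iff g
  obtain ⟨ψp, hψp⟩ := euclid2 (η.toMonoidHom.comp (MonoidHom.comp Abelianization.of p))
    (η.surjective.comp (ofsurj.comp hp))
  obtain ⟨ψq, hψq⟩ := euclid2 (η.toMonoidHom.comp (MonoidHom.comp Abelianization.of q))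
    (η.surjective.comp (ofsurj.comp hq))
  set p' := p.comp ψp.toMonoidHom with hp'def
  set q' := q.comp ψq.toMonoidHom with hq'def
  have hp' : Surjective p' := hp.comp ψp.surjective
  have hq' : Surjective q' := hq.comp ψq.surjective
  have hofp : ∀ w, η (Abelianization.of (p' w)) = std2 w := fun w => hψp w
  have hofq : ∀ w, η (Abelianization.of (q' w)) = std2 w := fun w => hψq w
  have hofeq : ∀ w, Abelianization.of (p' w) = Abelianization.of (q' w) := fun w =>
    η.injective (by rw [hofp, hofq])
  have hGA : ∀ g h : G, g * h * g⁻¹ * h⁻¹ ∈ K :=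
    fun g h => Subgroup.commutator_mem_commutator (Subgroup.mem_top g) (Subgroup.mem_top h)
  have hconj : ∀ w, p' w * (q' w)⁻¹ ∈ K := by
    intro w
    rw [← hmemK, map_mul, map_inv, hofeq w, mul_inv_cancel]
  have hconj' : ∀ w, q' w * (p' w)⁻¹ ∈ K := by
    intro w
    rw [← hmemK, map_mul, map_inv, ← hofeq w, mul_inv_cancel]
  set t : F2 := ga * gb * ga⁻¹ * gb⁻¹ with ht
  have hptc : ∀ r : F2 →* G, r t = r ga * r gb * (r ga)⁻¹ * (r gb)⁻¹ := by
    intro r; rw [ht]; simp [map_mul, map_inv]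
  have hpt : p' t ∈ K := by rw [hptc p']; exact hGA _ _
  have hqt : q' t ∈ K := by rw [hptc q']; exact hGA _ _
  have hCF2 : ⁅(⊤ : Subgroup F2), (⊤ : Subgroup F2)⁆
      = Subgroup.normalClosure ({t} : Set F2) := by
    rw [ht]; exact commutator_eq_normalClosure_pair closure_pair_F2
  have hker : ∀ r' : F2 →* G, (∀ w, η (Abelianization.of (r' w)) = std2 w) →
      ∀ w, r' w = 1 → w ∈ Subgroup.normalClosure ({t} : Set F2) := by
    intro r' hr w hw
    have h2 : std2 w = 1 := by rw [← hr w, hw, map_one, map_one]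
    rw [← hCF2]
    exact std2_ker w h2
  have hKp : K = Subgroup.normalClosure ({p' t} : Set G) := by
    rw [hK, hptc p']
    exact commutator_eq_normalClosure_pair (gen_top hp')
  have hKq : K = Subgroup.normalClosure ({q' t} : Set G) := by
    rw [hK, hptc q']
    exact commutator_eq_normalClosure_pair (gen_top hq')
  have dir1 : ∀ w, p' w = 1 → q' w = 1 :=
    twin K p' q' t hGA hconj hpt hqt (hKp ▸ hqt) (hker p' hofp)
  have dir2 : ∀ w, q' w = 1 → p' w = 1 :=
    twin K q' p' t hGA hconj' hqt hpt (hKq ▸ hpt) (hker q' hofq)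
  obtain ⟨φ, hφ⟩ := build_phi hp' hq' (fun w => ⟨dir1 w, dir2 w⟩)
  refine ⟨ψq.symm.trans ψp, φ, fun w => ?_⟩
  have h := hφ (ψq.symm w)
  have hq2 : q' (ψq.symm w) = q w := by
    show q (ψq (ψq.symm w)) = q w
    rw [MulEquiv.apply_symm_apply]
  rw [← hq2, ← h]
  rfl

end Assembly

end AutTrans

/-- Let `G` be a two-generated group which either has a normal abelian subgroup with
infinite cyclic quotient, or is metabelian with abelianization isomorphic to `ℤ²`.  Then
`Aut (F₂)` acts transitively on the `Aut (G)`-orbits of generating pairs: for any two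
epimorphisms `p q : F₂ → G` there are automorphisms `ψ` of `F₂` and `φ` of `G` with
`q = φ ∘ p ∘ ψ`. -/
theorem aut_transitive_on_generating_pairs
    {G : Type*} [Group G]
    (hgen : ∃ p : FreeGroup (Fin 2) →* G, Function.Surjective p)
    (hcase :
      (∃ (A : Subgroup G) (_ : A.Normal), (∀ x y : A, x * y = y * x) ∧
        Nonempty ((G ⧸ A) ≃* Multiplicative ℤ)) ∨
      (⁅⁅(⊤ : Subgroup G), (⊤ : Subgroup G)⁆, ⁅(⊤ : Subgroup G), (⊤ : Subgroup G)⁆⁆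
          = (⊥ : Subgroup G) ∧
        Nonempty (Abelianization G ≃* Multiplicative (ℤ × ℤ)))) :
    ∀ p q : FreeGroup (Fin 2) →* G, Function.Surjective p → Function.Surjective q →
      ∃ (ψ : FreeGroup (Fin 2) ≃* FreeGroup (Fin 2)) (φ : G ≃* G),
        ∀ w, q w = φ (p (ψ w)) := by
  intro p q hp hq
  rcases hcase with ⟨A, hN, hA, ⟨ε⟩⟩ | ⟨hbot, ⟨η⟩⟩
  · letI := hN
    exact AutTrans.caseA A hA ε p q hp hq
  · exact AutTrans.caseB hbot η p q hp hq
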